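/- Let H be a Hopf algebra over a commutative ring k and A a unital associative k-algebra with a left H-module algebra action ▷ admitting a momentum map J. For 𝖺 ∈ Gl(H,A) define 𝖺_J(g) := J(S(g₁)) 𝖺(g₂) J(g₃) (the convolution product (J∘S) * 𝖺 * J). Then 𝖺_J(g) lies in the center Z(A) for every g ∈ H, and 𝖺_J : H → Z(A) is a unital algebra homomorphism: 𝖺_J(1_H) = 1_A and 𝖺_J(gh) = 𝖺_J(g)𝖺_J(h) for all g,h ∈ H. -/

import Mathlib

open scoped TensorProduct

noncomputable section

namespace EquivariantMorita

/-- The Sweedler-type map `h ↦ μ (f h₍₁₎) (g h₍₂₎)` (with implicit summation over the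
Sweedler decomposition `Δ h = h₍₁₎ ⊗ h₍₂₎` of the comultiplication). -/
def sw (k : Type*) {H M N P : Type*} [CommRing k]
    [AddCommGroup H] [Module k H] [Coalgebra k H]
    [AddCommGroup M] [Module k M] [AddCommGroup N] [Module k N]
    [AddCommGroup P] [Module k P]
    (μ : M →ₗ[k] N →ₗ[k] P) (f : H →ₗ[k] M) (g : H →ₗ[k] N) : H →ₗ[k] P :=
  TensorProduct.lift μ ∘ₗ TensorProduct.map f g ∘ₗ (Coalgebra.comul : H →ₗ[k] H ⊗[k] H)

/-- The convolution-type map `h ↦ f (h₍₁₎) * g (h₍₂₎)`. -/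
def swMul (k : Type*) {H A : Type*} [CommRing k]
    [AddCommGroup H] [Module k H] [Coalgebra k H] [Ring A] [Algebra k A]
    (f g : H →ₗ[k] A) : H →ₗ[k] A :=
  sw k (LinearMap.mul k A) f g

section ModuleAlgebra

variable (k : Type*) [CommRing k] {H : Type*} [Ring H] [HopfAlgebra k H]
variable {A : Type*} [Ring A] [Algebra k A]

/-- `act : H × A → A` (given as a `k`-bilinear map) makes `A` a left `H`-module algebra:
`(gh) ▷ a = g ▷ (h ▷ a)`, `1 ▷ a = a`, `h ▷ (ab) = (h₍₁₎ ▷ a)(h₍₂₎ ▷ b)` and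
`h ▷ 1 = ε(h) 1`. -/
structure IsModuleAlgebraAction (act : H →ₗ[k] A →ₗ[k] A) : Prop where
  mul_act : ∀ (g h : H) (a : A), act (g * h) a = act g (act h a)
  one_act : ∀ a : A, act 1 a = a
  act_mul : ∀ (h : H) (a b : A), act h (a * b) = swMul k (act.flip a) (act.flip b) h
  act_one : ∀ h : H, act h 1 = Coalgebra.counit (R := k) h • (1 : A)

/-- Membership in `Gl(H,A)`: (i) `𝖺(1) = 1`, (ii) `𝖺(gh) = 𝖺(g₍₁₎)(g₍₂₎ ▷ 𝖺(h))`,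
(iii) `(h₍₁₎ ▷ b) 𝖺(h₍₂₎) = 𝖺(h₍₁₎)(h₍₂₎ ▷ b)`. -/
structure MemGl (act : H →ₗ[k] A →ₗ[k] A) (a : H →ₗ[k] A) : Prop where
  map_one' : a 1 = 1
  map_mul' : ∀ g h : H, a (g * h) = swMul k a (act.flip (a h)) g
  comm' : ∀ (h : H) (b : A), swMul k (act.flip b) a h = swMul k a (act.flip b) h

/-- `J` is a momentum map for the action `act`: it is a unital algebra homomorphism
`H → A` with `h ▷ a = J(h₍₁₎) a J(S(h₍₂₎))`. -/
structure IsMomentumMap (act : H →ₗ[k] A →ₗ[k] A) (J : H →ₗ[k] A) : Prop where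
  map_one' : J 1 = 1
  map_mul' : ∀ g h : H, J (g * h) = J g * J h
  inner' : ∀ (h : H) (a : A),
    act h a = swMul k J (LinearMap.mul k A a ∘ₗ (J ∘ₗ HopfAlgebra.antipode (R := k))) h

end ModuleAlgebra

end EquivariantMorita

namespace EquivariantMorita

section CenterMaps

variable (k : Type*) [CommRing k]
variable {H : Type*} [Ring H] [HopfAlgebra k H]
variable {A : Type*} [Ring A] [Algebra k A]

/-- `𝖺_J : g ↦ J(S(g₍₁₎)) 𝖺(g₍₂₎) J(g₍₃₎)`, i.e. the convolution `(J ∘ S) * (𝖺 * J)`. -/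
def toCenterMap (J a : H →ₗ[k] A) : H →ₗ[k] A :=
  swMul k (J ∘ₗ HopfAlgebra.antipode (R := k)) (swMul k a J)

/-- `𝗓 ↦ (g ↦ J(g₍₁₎) 𝗓(g₍₂₎) J(S(g₍₃₎)))`, i.e. the convolution `J * (𝗓 * (J ∘ S))`. -/
def ofCenterMap (J z : H →ₗ[k] A) : H →ₗ[k] A :=
  swMul k J (swMul k z (J ∘ₗ HopfAlgebra.antipode (R := k)))

end CenterMaps

end EquivariantMorita

namespace EquivariantMorita

open TensorProduct LinearMap

section Conv

variable {k : Type*} [CommRing k] {C : Type*} [AddCommGroup C] [Module k C]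
variable {A : Type*} [Ring A] [Algebra k A] {B : Type*} [Ring B] [Algebra k B]

/-- Convolution with respect to explicit comultiplication data. -/
def convD (Δc : C →ₗ[k] C ⊗[k] C) (f g : C →ₗ[k] A) : C →ₗ[k] A :=
  TensorProduct.lift (LinearMap.mul k A) ∘ₗ TensorProduct.map f g ∘ₗ Δc

lemma convD_apply (Δc : C →ₗ[k] C ⊗[k] C) (f g : C →ₗ[k] A) (c : C) :
    convD Δc f g c = TensorProduct.lift (LinearMap.mul k A) (TensorProduct.map f g (Δc c)) := rfl

lemma conv_assoc (Δc : C →ₗ[k] C ⊗[k] C)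
    (hco : (TensorProduct.assoc k C C C).toLinearMap ∘ₗ Δc.rTensor C ∘ₗ Δc = Δc.lTensor C ∘ₗ Δc)
    (f g h : C →ₗ[k] A) :
    convD Δc (convD Δc f g) h = convD Δc f (convD Δc g h) := by
  have e1 : TensorProduct.map (convD Δc f g) h =
      (TensorProduct.lift (LinearMap.mul k A)).rTensor A ∘ₗ
        TensorProduct.map (TensorProduct.map f g) h ∘ₗ Δc.rTensor C := by
    ext x y; simp [convD]
  have e2 : TensorProduct.map f (convD Δc g h) =
      (TensorProduct.lift (LinearMap.mul k A)).lTensor A ∘ₗ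
        TensorProduct.map f (TensorProduct.map g h) ∘ₗ Δc.lTensor C := by
    ext x y; simp [convD]
  have key : TensorProduct.lift (LinearMap.mul k A) ∘ₗ
        (TensorProduct.lift (LinearMap.mul k A)).rTensor A ∘ₗ
        TensorProduct.map (TensorProduct.map f g) h ∘ₗ
        (TensorProduct.assoc k C C C).symm.toLinearMap =
      TensorProduct.lift (LinearMap.mul k A) ∘ₗ
        (TensorProduct.lift (LinearMap.mul k A)).lTensor A ∘ₗ
        TensorProduct.map f (TensorProduct.map g h) := by
    ext x y z; simp [mul_assoc]
  ext c
  have hc := LinearMap.congr_fun hco c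
  simp only [LinearMap.comp_apply, LinearEquiv.coe_coe] at hc
  have hc' : Δc.rTensor C (Δc c) =
      (TensorProduct.assoc k C C C).symm (Δc.lTensor C (Δc c)) := by
    rw [← hc, LinearEquiv.symm_apply_apply]
  calc convD Δc (convD Δc f g) h c
      = TensorProduct.lift (LinearMap.mul k A)
          ((TensorProduct.map (convD Δc f g) h) (Δc c)) := rfl
    _ = TensorProduct.lift (LinearMap.mul k A)
          (((TensorProduct.lift (LinearMap.mul k A)).rTensor A)
            (TensorProduct.map (TensorProduct.map f g) h (Δc.rTensor C (Δc c)))) := by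
        rw [e1]; rfl
    _ = (TensorProduct.lift (LinearMap.mul k A) ∘ₗ
          (TensorProduct.lift (LinearMap.mul k A)).rTensor A ∘ₗ
          TensorProduct.map (TensorProduct.map f g) h ∘ₗ
          (TensorProduct.assoc k C C C).symm.toLinearMap) (Δc.lTensor C (Δc c)) := by
        rw [hc']; rfl
    _ = (TensorProduct.lift (LinearMap.mul k A) ∘ₗ
          (TensorProduct.lift (LinearMap.mul k A)).lTensor A ∘ₗ
          TensorProduct.map f (TensorProduct.map g h)) (Δc.lTensor C (Δc c)) := by
        rw [key]
    _ = convD Δc f (convD Δc g h) c := by rw [convD_apply, e2]; rfl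

/-- Left unit law for convolution. -/
lemma conv_unit_left (Δc : C →ₗ[k] C ⊗[k] C) (εc : C →ₗ[k] k)
    (hr : εc.rTensor C ∘ₗ Δc = TensorProduct.mk k k C 1)
    (f : C →ₗ[k] A) :
    convD Δc (Algebra.linearMap k A ∘ₗ εc) f = f := by
  have e1 : TensorProduct.map (Algebra.linearMap k A ∘ₗ εc) f =
      TensorProduct.map (Algebra.linearMap k A) f ∘ₗ εc.rTensor C := by
    ext x y; simp
  have e2 : TensorProduct.lift (LinearMap.mul k A) ∘ₗ
      TensorProduct.map (Algebra.linearMap k A) f ∘ₗ TensorProduct.mk k k C 1 = f := by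
    ext c; simp [Algebra.smul_def]
  ext c
  calc convD Δc (Algebra.linearMap k A ∘ₗ εc) f c
      = TensorProduct.lift (LinearMap.mul k A)
          (TensorProduct.map (Algebra.linearMap k A) f ((εc.rTensor C ∘ₗ Δc) c)) := by
        rw [convD_apply, e1]; rfl
    _ = (TensorProduct.lift (LinearMap.mul k A) ∘ₗ
          TensorProduct.map (Algebra.linearMap k A) f ∘ₗ TensorProduct.mk k k C 1) c := by
        rw [hr]; rfl
    _ = f c := by rw [e2]

/-- Right unit law for convolution. -/
lemma conv_unit_right (Δc : C →ₗ[k] C ⊗[k] C) (εc : C →ₗ[k] k)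
    (hl : εc.lTensor C ∘ₗ Δc = (TensorProduct.mk k C k).flip 1)
    (f : C →ₗ[k] A) :
    convD Δc f (Algebra.linearMap k A ∘ₗ εc) = f := by
  have e1 : TensorProduct.map f (Algebra.linearMap k A ∘ₗ εc) =
      TensorProduct.map f (Algebra.linearMap k A) ∘ₗ εc.lTensor C := by
    ext x y; simp
  have e2 : TensorProduct.lift (LinearMap.mul k A) ∘ₗ
      TensorProduct.map f (Algebra.linearMap k A) ∘ₗ (TensorProduct.mk k C k).flip 1 = f := by
    ext c; simp [Algebra.smul_def, Algebra.commutes]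
  ext c
  calc convD Δc f (Algebra.linearMap k A ∘ₗ εc) c
      = TensorProduct.lift (LinearMap.mul k A)
          (TensorProduct.map f (Algebra.linearMap k A) ((εc.lTensor C ∘ₗ Δc) c)) := by
        rw [convD_apply, e1]; rfl
    _ = (TensorProduct.lift (LinearMap.mul k A) ∘ₗ
          TensorProduct.map f (Algebra.linearMap k A) ∘ₗ (TensorProduct.mk k C k).flip 1) c := by
        rw [hl]; rfl
    _ = f c := by rw [e2]

/-- Left multiplication commutes with convolution in the first slot. -/
lemma mul_comp_conv (Δc : C →ₗ[k] C ⊗[k] C) (b : A) (f g : C →ₗ[k] A) :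
    LinearMap.mul k A b ∘ₗ convD Δc f g = convD Δc (LinearMap.mul k A b ∘ₗ f) g := by
  have e : TensorProduct.lift (LinearMap.mul k A) ∘ₗ
        TensorProduct.map (LinearMap.mul k A b ∘ₗ f) g =
      LinearMap.mul k A b ∘ₗ TensorProduct.lift (LinearMap.mul k A) ∘ₗ
        TensorProduct.map f g := by
    ext x y; simp [mul_assoc]
  ext c
  have := LinearMap.congr_fun e (Δc c)
  simpa [convD] using this.symm

/-- Right multiplication commutes with convolution in the second slot. -/
lemma mulRight_comp_conv (Δc : C →ₗ[k] C ⊗[k] C) (b : A) (f g : C →ₗ[k] A) :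
    LinearMap.mulRight k b ∘ₗ convD Δc f g = convD Δc f (LinearMap.mulRight k b ∘ₗ g) := by
  have e : TensorProduct.lift (LinearMap.mul k A) ∘ₗ
        TensorProduct.map f (LinearMap.mulRight k b ∘ₗ g) =
      LinearMap.mulRight k b ∘ₗ TensorProduct.lift (LinearMap.mul k A) ∘ₗ
        TensorProduct.map f g := by
    ext x y; simp [mul_assoc]
  ext c
  have := LinearMap.congr_fun e (Δc c)
  simpa [convD] using this.symm

/-- A multiplicative linear map pushes through convolution. -/
lemma comp_conv (Δc : C →ₗ[k] C ⊗[k] C) (φ : A →ₗ[k] B)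
    (hφ : ∀ x y : A, φ (x * y) = φ x * φ y) (f g : C →ₗ[k] A) :
    φ ∘ₗ convD Δc f g = convD Δc (φ ∘ₗ f) (φ ∘ₗ g) := by
  have e : TensorProduct.lift (LinearMap.mul k B) ∘ₗ
        TensorProduct.map (φ ∘ₗ f) (φ ∘ₗ g) =
      φ ∘ₗ TensorProduct.lift (LinearMap.mul k A) ∘ₗ TensorProduct.map f g := by
    ext x y; simp [hφ]
  ext c
  have := LinearMap.congr_fun e (Δc c)
  simpa [convD] using this.symm

/-- Convolution pulls back along a comultiplication-preserving map. -/
lemma conv_comp (Δc : C →ₗ[k] C ⊗[k] C) {C' : Type*} [AddCommGroup C'] [Module k C']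
    (Δc' : C' →ₗ[k] C' ⊗[k] C') (ψ : C' →ₗ[k] C)
    (hψ : Δc ∘ₗ ψ = TensorProduct.map ψ ψ ∘ₗ Δc') (f g : C →ₗ[k] A) :
    convD Δc f g ∘ₗ ψ = convD Δc' (f ∘ₗ ψ) (g ∘ₗ ψ) := by
  ext c
  simp only [convD, LinearMap.comp_apply]
  rw [← LinearMap.comp_apply Δc ψ, hψ]
  simp only [LinearMap.comp_apply]
  congr 1
  rw [← LinearMap.comp_apply, ← TensorProduct.map_comp]

end Conv



section TensorCoalg

variable (k : Type*) [CommRing k] (H : Type*) [Ring H] [HopfAlgebra k H]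

/-- The middle-four interchange on `(H⊗H)⊗(H⊗H)`. -/
abbrev ttcH : (H ⊗[k] H) ⊗[k] (H ⊗[k] H) →ₗ[k] (H ⊗[k] H) ⊗[k] (H ⊗[k] H) :=
  (TensorProduct.tensorTensorTensorComm k H H H H).toLinearMap

/-- Comultiplication on `H ⊗ H`. -/
def comul2 : H ⊗[k] H →ₗ[k] (H ⊗[k] H) ⊗[k] (H ⊗[k] H) :=
  ttcH k H ∘ₗ TensorProduct.map Coalgebra.comul Coalgebra.comul

/-- Counit on `H ⊗ H`. -/
def counit2 : H ⊗[k] H →ₗ[k] k :=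
  LinearMap.mul' k k ∘ₗ TensorProduct.map Coalgebra.counit Coalgebra.counit

/-- First projection `H ⊗ H → H`, killing the second factor with the counit. -/
def piL : H ⊗[k] H →ₗ[k] H :=
  (TensorProduct.rid k H).toLinearMap ∘ₗ LinearMap.lTensor H Coalgebra.counit

/-- Second projection `H ⊗ H → H`, killing the first factor with the counit. -/
def piR : H ⊗[k] H →ₗ[k] H :=
  (TensorProduct.lid k H).toLinearMap ∘ₗ LinearMap.rTensor H Coalgebra.counit

variable {k H}

lemma comul2_tmul (x y : H) :
    comul2 k H (x ⊗ₜ[k] y) = ttcH k H ((Coalgebra.comul x) ⊗ₜ[k] (Coalgebra.comul y)) := rfl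

lemma counit2_tmul (x y : H) :
    counit2 k H (x ⊗ₜ[k] y) =
      Coalgebra.counit (R := k) x * Coalgebra.counit (R := k) y := rfl

@[simp] lemma piL_tmul (x y : H) :
    piL k H (x ⊗ₜ[k] y) = Coalgebra.counit (R := k) y • x := rfl

@[simp] lemma piR_tmul (x y : H) :
    piR k H (x ⊗ₜ[k] y) = Coalgebra.counit (R := k) x • y := rfl

lemma piL_comp_comul : piL k H ∘ₗ (Coalgebra.comul : H →ₗ[k] H ⊗[k] H) = LinearMap.id := by
  ext x
  simp only [LinearMap.comp_apply, piL, LinearMap.id_apply]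
  rw [Coalgebra.lTensor_counit_comul]
  simp

lemma piR_comp_comul : piR k H ∘ₗ (Coalgebra.comul : H →ₗ[k] H ⊗[k] H) = LinearMap.id := by
  ext x
  simp only [LinearMap.comp_apply, piR, LinearMap.id_apply]
  rw [Coalgebra.rTensor_counit_comul]
  simp

lemma counit2_comul (y : H) :
    counit2 k H (Coalgebra.comul y) = Coalgebra.counit (R := k) y := by
  simp only [counit2, LinearMap.comp_apply]
  rw [← LinearMap.lTensor_comp_rTensor, LinearMap.comp_apply,
    Coalgebra.rTensor_counit_comul]
  simp

/-- TT3 : `map πL πR ∘ ttc = map πL πR`. -/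
lemma TT3 : TensorProduct.map (piL k H) (piR k H) ∘ₗ ttcH k H =
    TensorProduct.map (piL k H) (piR k H) := by
  apply TensorProduct.ext_fourfold'
  intro a b c d
  simp [smul_tmul', tmul_smul, smul_smul, mul_comm]

/-- K1 : `map πL πR ∘ Δ₂ = id`. -/
lemma K1 : TensorProduct.map (piL k H) (piR k H) ∘ₗ comul2 k H = LinearMap.id := by
  ext x y
  simp only [LinearMap.comp_apply, comul2_tmul, LinearMap.id_apply,
    AlgebraTensorModule.curry_apply, curry_apply, LinearMap.coe_restrictScalars]
  rw [← LinearMap.comp_apply (TensorProduct.map _ _) (ttcH k H), TT3]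
  rw [TensorProduct.map_tmul]
  have hx : piL k H (Coalgebra.comul x) = x := LinearMap.congr_fun piL_comp_comul x
  have hy : piR k H (Coalgebra.comul y) = y := LinearMap.congr_fun piR_comp_comul y
  rw [hx, hy]

/-- TT5 : `map πR πL ∘ ttc = comm ∘ map πR πL`. -/
lemma TT5 : TensorProduct.map (piR k H) (piL k H) ∘ₗ ttcH k H =
    (TensorProduct.comm k H H).toLinearMap ∘ₗ TensorProduct.map (piR k H) (piL k H) := by
  apply TensorProduct.ext_fourfold'
  intro a b c d
  simp [smul_tmul', tmul_smul, smul_smul, mul_comm]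

/-- K6 : `map πR πL ∘ Δ₂ = comm`. -/
lemma K6 : TensorProduct.map (piR k H) (piL k H) ∘ₗ comul2 k H =
    (TensorProduct.comm k H H).toLinearMap := by
  ext x y
  simp only [LinearMap.comp_apply, comul2_tmul, AlgebraTensorModule.curry_apply,
    curry_apply, LinearMap.coe_restrictScalars]
  rw [← LinearMap.comp_apply (TensorProduct.map _ _) (ttcH k H), TT5]
  simp only [LinearMap.comp_apply, TensorProduct.map_tmul, LinearEquiv.coe_coe]
  have hx : piR k H (Coalgebra.comul x) = x := LinearMap.congr_fun piR_comp_comul x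
  have hy : piL k H (Coalgebra.comul y) = y := LinearMap.congr_fun piL_comp_comul y
  rw [hx, hy, TensorProduct.comm_tmul]

/-- TT1 : `map πL πL ∘ ttc = (counit2 on second) • first`. -/
lemma TT1 : TensorProduct.map (piL k H) (piL k H) ∘ₗ ttcH k H =
    (TensorProduct.rid k (H ⊗[k] H)).toLinearMap ∘ₗ
      LinearMap.lTensor (H ⊗[k] H) (counit2 k H) := by
  apply TensorProduct.ext_fourfold'
  intro a b c d
  simp [counit2_tmul, smul_tmul', tmul_smul, smul_smul, mul_comm]

/-- TT2 : `map πR πR ∘ ttc = (counit2 on first) • second`. -/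
lemma TT2 : TensorProduct.map (piR k H) (piR k H) ∘ₗ ttcH k H =
    (TensorProduct.lid k (H ⊗[k] H)).toLinearMap ∘ₗ
      LinearMap.rTensor (H ⊗[k] H) (counit2 k H) := by
  apply TensorProduct.ext_fourfold'
  intro a b c d
  simp [counit2_tmul, smul_tmul', tmul_smul, smul_smul, mul_comm]

/-- K2 : `πL` is a coalgebra morphism. -/
lemma K2 : (Coalgebra.comul : H →ₗ[k] H ⊗[k] H) ∘ₗ piL k H =
    TensorProduct.map (piL k H) (piL k H) ∘ₗ comul2 k H := by
  ext x y
  simp only [LinearMap.comp_apply, comul2_tmul, AlgebraTensorModule.curry_apply,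
    curry_apply, LinearMap.coe_restrictScalars]
  rw [← LinearMap.comp_apply (TensorProduct.map _ _) (ttcH k H), TT1]
  rw [piL_tmul]
  simp only [LinearMap.comp_apply, LinearMap.lTensor_tmul, LinearEquiv.coe_coe,
    TensorProduct.rid_tmul, map_smul]
  rw [counit2_comul]

/-- K3 : `πR` is a coalgebra morphism. -/
lemma K3 : (Coalgebra.comul : H →ₗ[k] H ⊗[k] H) ∘ₗ piR k H =
    TensorProduct.map (piR k H) (piR k H) ∘ₗ comul2 k H := by
  ext x y
  simp only [LinearMap.comp_apply, comul2_tmul, AlgebraTensorModule.curry_apply,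
    curry_apply, LinearMap.coe_restrictScalars]
  rw [← LinearMap.comp_apply (TensorProduct.map _ _) (ttcH k H), TT2]
  rw [piR_tmul]
  simp only [LinearMap.comp_apply, LinearMap.rTensor_tmul, LinearEquiv.coe_coe,
    TensorProduct.lid_tmul, map_smul]
  rw [counit2_comul]

/-- K5a : `ε ∘ πL = ε₂`. -/
lemma K5a : (Coalgebra.counit : H →ₗ[k] k) ∘ₗ piL k H = counit2 k H := by
  ext x y
  simp [counit2_tmul, mul_comm]

/-- K5b : `ε ∘ πR = ε₂`. -/
lemma K5b : (Coalgebra.counit : H →ₗ[k] k) ∘ₗ piR k H = counit2 k H := by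
  ext x y
  simp [counit2_tmul]

/-- K5c : `ε ∘ mul' = ε₂`. -/
lemma K5c : (Coalgebra.counit : H →ₗ[k] k) ∘ₗ LinearMap.mul' k H = counit2 k H := by
  ext x y
  simp [counit2_tmul]

/-- TT4 : `map m m ∘ ttc` is the multiplication of `H ⊗ H`. -/
lemma TT4 : TensorProduct.map (LinearMap.mul' k H) (LinearMap.mul' k H) ∘ₗ ttcH k H =
    LinearMap.mul' k (H ⊗[k] H) := by
  apply TensorProduct.ext_fourfold'
  intro a b c d
  simp [Algebra.TensorProduct.tmul_mul_tmul]

/-- K4 : `mul'` is a coalgebra morphism. -/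
lemma K4 : (Coalgebra.comul : H →ₗ[k] H ⊗[k] H) ∘ₗ LinearMap.mul' k H =
    TensorProduct.map (LinearMap.mul' k H) (LinearMap.mul' k H) ∘ₗ comul2 k H := by
  ext x y
  simp only [LinearMap.comp_apply, comul2_tmul, AlgebraTensorModule.curry_apply,
    curry_apply, LinearMap.coe_restrictScalars]
  rw [← LinearMap.comp_apply (TensorProduct.map _ _) (ttcH k H), TT4,
    LinearMap.mul'_apply, LinearMap.mul'_apply, Bialgebra.comul_mul]

/-- The right counit law for `(Δ₂, ε₂)`. -/
lemma hr2 : (counit2 k H).rTensor (H ⊗[k] H) ∘ₗ comul2 k H =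
    TensorProduct.mk k k (H ⊗[k] H) 1 := by
  have TTr : (counit2 k H).rTensor (H ⊗[k] H) ∘ₗ ttcH k H =
      (LinearMap.mul' k k).rTensor (H ⊗[k] H) ∘ₗ
        (TensorProduct.tensorTensorTensorComm k k H k H).toLinearMap ∘ₗ
        TensorProduct.map ((Coalgebra.counit : H →ₗ[k] k).rTensor H)
          ((Coalgebra.counit : H →ₗ[k] k).rTensor H) := by
    apply TensorProduct.ext_fourfold'
    intro a b c d
    simp [counit2_tmul]
  ext x y
  simp only [LinearMap.comp_apply, comul2_tmul, AlgebraTensorModule.curry_apply,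
    curry_apply, LinearMap.coe_restrictScalars, TensorProduct.mk_apply]
  rw [← LinearMap.comp_apply ((counit2 k H).rTensor _) (ttcH k H), TTr]
  simp only [LinearMap.comp_apply, TensorProduct.map_tmul, Coalgebra.rTensor_counit_comul,
    LinearEquiv.coe_coe, TensorProduct.tensorTensorTensorComm_tmul, LinearMap.rTensor_tmul,
    LinearMap.mul'_apply, mul_one]

/-- The left counit law for `(Δ₂, ε₂)`. -/
lemma hl2 : (counit2 k H).lTensor (H ⊗[k] H) ∘ₗ comul2 k H =
    (TensorProduct.mk k (H ⊗[k] H) k).flip 1 := by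
  have TTl : (counit2 k H).lTensor (H ⊗[k] H) ∘ₗ ttcH k H =
      (LinearMap.mul' k k).lTensor (H ⊗[k] H) ∘ₗ
        (TensorProduct.tensorTensorTensorComm k H k H k).toLinearMap ∘ₗ
        TensorProduct.map ((Coalgebra.counit : H →ₗ[k] k).lTensor H)
          ((Coalgebra.counit : H →ₗ[k] k).lTensor H) := by
    apply TensorProduct.ext_fourfold'
    intro a b c d
    simp [counit2_tmul]
  ext x y
  simp only [LinearMap.comp_apply, comul2_tmul, AlgebraTensorModule.curry_apply,
    curry_apply, LinearMap.coe_restrictScalars, LinearMap.flip_apply,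
    TensorProduct.mk_apply]
  rw [← LinearMap.comp_apply ((counit2 k H).lTensor _) (ttcH k H), TTl]
  simp only [LinearMap.comp_apply, TensorProduct.map_tmul, Coalgebra.lTensor_counit_comul,
    LinearEquiv.coe_coe, TensorProduct.tensorTensorTensorComm_tmul, LinearMap.lTensor_tmul,
    LinearMap.mul'_apply, mul_one]

/-- The reshuffle used to prove coassociativity of `Δ₂`. -/
def psiMap : (H ⊗[k] (H ⊗[k] H)) ⊗[k] (H ⊗[k] (H ⊗[k] H)) →ₗ[k]
    (H ⊗[k] H) ⊗[k] ((H ⊗[k] H) ⊗[k] (H ⊗[k] H)) :=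
  LinearMap.lTensor (H ⊗[k] H) (ttcH k H) ∘ₗ
    (TensorProduct.tensorTensorTensorComm k H (H ⊗[k] H) H (H ⊗[k] H)).toLinearMap

def psiMap' : ((H ⊗[k] H) ⊗[k] H) ⊗[k] ((H ⊗[k] H) ⊗[k] H) →ₗ[k]
    ((H ⊗[k] H) ⊗[k] (H ⊗[k] H)) ⊗[k] (H ⊗[k] H) :=
  LinearMap.rTensor (H ⊗[k] H) (ttcH k H) ∘ₗ
    (TensorProduct.tensorTensorTensorComm k (H ⊗[k] H) H (H ⊗[k] H) H).toLinearMap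

lemma hcoB : (comul2 k H).lTensor (H ⊗[k] H) ∘ₗ ttcH k H =
    psiMap ∘ₗ TensorProduct.map
      ((Coalgebra.comul : H →ₗ[k] H ⊗[k] H).lTensor H)
      ((Coalgebra.comul : H →ₗ[k] H ⊗[k] H).lTensor H) := by
  apply TensorProduct.ext_fourfold'
  intro a b c d
  simp [psiMap, comul2_tmul]

lemma hcoA : (comul2 k H).rTensor (H ⊗[k] H) ∘ₗ ttcH k H =
    psiMap' ∘ₗ TensorProduct.map
      ((Coalgebra.comul : H →ₗ[k] H ⊗[k] H).rTensor H)
      ((Coalgebra.comul : H →ₗ[k] H ⊗[k] H).rTensor H) := by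
  apply TensorProduct.ext_fourfold'
  intro a b c d
  simp [psiMap', comul2_tmul]

lemma step3 : (TensorProduct.assoc k (H ⊗[k] H) (H ⊗[k] H) (H ⊗[k] H)).toLinearMap ∘ₗ
      (psiMap' : _ →ₗ[k] _) ∘ₗ TensorProduct.map
        (TensorProduct.assoc k H H H).symm.toLinearMap
        (TensorProduct.assoc k H H H).symm.toLinearMap =
    psiMap := by
  ext a b c d e f
  simp [psiMap, psiMap']

/-- Coassociativity of `Δ₂`. -/
lemma hco2 : (TensorProduct.assoc k (H ⊗[k] H) (H ⊗[k] H) (H ⊗[k] H)).toLinearMap ∘ₗ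
      (comul2 k H).rTensor (H ⊗[k] H) ∘ₗ comul2 k H =
    (comul2 k H).lTensor (H ⊗[k] H) ∘ₗ comul2 k H := by
  ext x y
  simp only [LinearMap.comp_apply, comul2_tmul, AlgebraTensorModule.curry_apply,
    curry_apply, LinearMap.coe_restrictScalars, LinearEquiv.coe_coe]
  have hA := LinearMap.congr_fun (hcoA (k := k) (H := H))
    ((Coalgebra.comul x : H ⊗[k] H) ⊗ₜ[k] (Coalgebra.comul y))
  have hB := LinearMap.congr_fun (hcoB (k := k) (H := H))
    ((Coalgebra.comul x : H ⊗[k] H) ⊗ₜ[k] (Coalgebra.comul y))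
  simp only [LinearMap.comp_apply, TensorProduct.map_tmul, LinearEquiv.coe_coe] at hA hB
  rw [hA, hB]
  have hx : (Coalgebra.comul : H →ₗ[k] H ⊗[k] H).rTensor H (Coalgebra.comul x) =
      (TensorProduct.assoc k H H H).symm
        ((Coalgebra.comul : H →ₗ[k] H ⊗[k] H).lTensor H (Coalgebra.comul x)) :=
    (Coalgebra.coassoc_symm_apply x).symm
  have hy : (Coalgebra.comul : H →ₗ[k] H ⊗[k] H).rTensor H (Coalgebra.comul y) =
      (TensorProduct.assoc k H H H).symm
        ((Coalgebra.comul : H →ₗ[k] H ⊗[k] H).lTensor H (Coalgebra.comul y)) :=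
    (Coalgebra.coassoc_symm_apply y).symm
  rw [hx, hy]
  have := LinearMap.congr_fun (step3 (k := k) (H := H))
    (((Coalgebra.comul : H →ₗ[k] H ⊗[k] H).lTensor H (Coalgebra.comul x)) ⊗ₜ[k]
      ((Coalgebra.comul : H →ₗ[k] H ⊗[k] H).lTensor H (Coalgebra.comul y)))
  simp only [LinearMap.comp_apply, TensorProduct.map_tmul, LinearEquiv.coe_coe] at this
  exact this

/-- TKa : mixed coproduct formula for `πL` in the first slot. -/
lemma TKa : TensorProduct.map (piL k H) (LinearMap.id : H ⊗[k] H →ₗ[k] H ⊗[k] H) ∘ₗ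
      comul2 k H =
    (TensorProduct.assoc k H H H).toLinearMap ∘ₗ
      (Coalgebra.comul : H →ₗ[k] H ⊗[k] H).rTensor H := by
  have aux1 : (TensorProduct.map (piL k H) LinearMap.id ∘ₗ ttcH k H) ∘ₗ
      (Coalgebra.comul : H →ₗ[k] H ⊗[k] H).lTensor (H ⊗[k] H) =
      (TensorProduct.assoc k H H H).toLinearMap := by
    apply TensorProduct.ext_threefold
    intro a b y
    have h2 : (TensorProduct.map (piL k H) LinearMap.id ∘ₗ ttcH k H) ∘ₗ
        TensorProduct.mk k (H ⊗[k] H) (H ⊗[k] H) (a ⊗ₜ[k] b) =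
        TensorProduct.mk k H (H ⊗[k] H) a ∘ₗ TensorProduct.mk k H H b ∘ₗ
          (TensorProduct.lid k H).toLinearMap ∘ₗ
          (Coalgebra.counit : H →ₗ[k] k).rTensor H := by
      ext c d
      simp only [AlgebraTensorModule.curry_apply, curry_apply, LinearMap.coe_restrictScalars,
        LinearMap.comp_apply, TensorProduct.mk_apply, LinearEquiv.coe_coe,
        TensorProduct.tensorTensorTensorComm_tmul, TensorProduct.map_tmul, piL_tmul,
        LinearMap.id_coe, id_eq, LinearMap.rTensor_tmul, TensorProduct.lid_tmul]
      rw [smul_tmul]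
      congr 1
      exact smul_tmul _ _ _
    have := LinearMap.congr_fun h2 (Coalgebra.comul y)
    simp only [LinearMap.comp_apply, TensorProduct.mk_apply,
      Coalgebra.rTensor_counit_comul, LinearEquiv.coe_coe, TensorProduct.lid_tmul,
      one_smul] at this
    simpa using this
  ext x y
  simp only [LinearMap.comp_apply, comul2_tmul, AlgebraTensorModule.curry_apply,
    curry_apply, LinearMap.coe_restrictScalars, LinearMap.rTensor_tmul,
    LinearEquiv.coe_coe]
  have := LinearMap.congr_fun aux1 ((Coalgebra.comul x : H ⊗[k] H) ⊗ₜ[k] y)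
  simp only [LinearMap.comp_apply, LinearMap.lTensor_tmul, LinearEquiv.coe_coe] at this
  exact this

end TensorCoalg


end EquivariantMorita

namespace EquivariantMorita

open TensorProduct LinearMap

section HopfLemmas

variable {k : Type*} [CommRing k] {H : Type*} [Ring H] [HopfAlgebra k H]
variable {A : Type*} [Ring A] [Algebra k A]

lemma antipode_one' : (HopfAlgebra.antipode (R := k) : H →ₗ[k] H) 1 = 1 := by
  have h := HopfAlgebra.mul_antipode_rTensor_comul_apply (R := k) (A := H) (1 : H)
  simpa [Bialgebra.comul_one, Algebra.TensorProduct.one_def] using h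

lemma swMul_eq (f g : H →ₗ[k] A) :
    swMul k f g = convD (Coalgebra.comul : H →ₗ[k] H ⊗[k] H) f g := rfl

lemma toCenterMap_eq (J a : H →ₗ[k] A) :
    toCenterMap k J a = convD (Coalgebra.comul : H →ₗ[k] H ⊗[k] H)
      (J ∘ₗ HopfAlgebra.antipode (R := k))
      (convD (Coalgebra.comul : H →ₗ[k] H ⊗[k] H) a J) := rfl

lemma antipode_conv_left :
    convD (Coalgebra.comul : H →ₗ[k] H ⊗[k] H) (HopfAlgebra.antipode (R := k))
      LinearMap.id = Algebra.linearMap k H ∘ₗ Coalgebra.counit :=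
  HopfAlgebra.mul_antipode_rTensor_comul

lemma antipode_conv_right :
    convD (Coalgebra.comul : H →ₗ[k] H ⊗[k] H) LinearMap.id
      (HopfAlgebra.antipode (R := k)) = Algebra.linearMap k H ∘ₗ Coalgebra.counit :=
  HopfAlgebra.mul_antipode_lTensor_comul

variable {act : H →ₗ[k] A →ₗ[k] A} {J : H →ₗ[k] A} {aM : H →ₗ[k] A}

lemma J_comp_linearMap (hJ : IsMomentumMap k act J) :
    J ∘ₗ Algebra.linearMap k H = Algebra.linearMap k A := by
  apply LinearMap.ext_ring
  simp [Algebra.algebraMap_eq_smul_one, hJ.map_one']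

lemma P1 (hJ : IsMomentumMap k act J) :
    convD (Coalgebra.comul : H →ₗ[k] H ⊗[k] H)
      (J ∘ₗ HopfAlgebra.antipode (R := k)) J =
    Algebra.linearMap k A ∘ₗ Coalgebra.counit := by
  have h := comp_conv (Coalgebra.comul : H →ₗ[k] H ⊗[k] H) J hJ.map_mul'
    (HopfAlgebra.antipode (R := k)) LinearMap.id
  rw [antipode_conv_left, LinearMap.comp_id] at h
  rw [← h, ← LinearMap.comp_assoc, J_comp_linearMap hJ]

lemma P2 (hJ : IsMomentumMap k act J) :
    convD (Coalgebra.comul : H →ₗ[k] H ⊗[k] H) J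
      (J ∘ₗ HopfAlgebra.antipode (R := k)) =
    Algebra.linearMap k A ∘ₗ Coalgebra.counit := by
  have h := comp_conv (Coalgebra.comul : H →ₗ[k] H ⊗[k] H) J hJ.map_mul'
    LinearMap.id (HopfAlgebra.antipode (R := k))
  rw [antipode_conv_right, LinearMap.comp_id] at h
  rw [← h, ← LinearMap.comp_assoc, J_comp_linearMap hJ]

lemma actFlip (hJ : IsMomentumMap k act J) (b : A) :
    act.flip b = convD (Coalgebra.comul : H →ₗ[k] H ⊗[k] H) J
      (LinearMap.mul k A b ∘ₗ (J ∘ₗ HopfAlgebra.antipode (R := k))) := by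
  ext h
  simpa [swMul_eq] using hJ.inner' h b

lemma P6 (b : A) :
    LinearMap.mul k A b ∘ₗ (Algebra.linearMap k A ∘ₗ (Coalgebra.counit : H →ₗ[k] k)) =
    LinearMap.mulRight k b ∘ₗ (Algebra.linearMap k A ∘ₗ Coalgebra.counit) := by
  ext h
  simp [Algebra.commutes]

lemma P4 (hJ : IsMomentumMap k act J) (b : A) :
    convD (Coalgebra.comul : H →ₗ[k] H ⊗[k] H) (act.flip b) J =
      LinearMap.mulRight k b ∘ₗ J := by
  rw [actFlip hJ b, conv_assoc _ Coalgebra.coassoc, ← mul_comp_conv, P1 hJ, P6 b,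
    ← mulRight_comp_conv, conv_unit_right _ _ Coalgebra.lTensor_counit_comp_comul]

lemma P5 (hJ : IsMomentumMap k act J) (b : A) :
    convD (Coalgebra.comul : H →ₗ[k] H ⊗[k] H)
      (J ∘ₗ HopfAlgebra.antipode (R := k)) (act.flip b) =
    LinearMap.mul k A b ∘ₗ (J ∘ₗ HopfAlgebra.antipode (R := k)) := by
  rw [actFlip hJ b, ← conv_assoc _ Coalgebra.coassoc, P1 hJ,
    conv_unit_left _ _ Coalgebra.rTensor_counit_comp_comul]

lemma central (hJ : IsMomentumMap k act J) (ha : MemGl k act aM) (b : A) :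
    LinearMap.mulRight k b ∘ₗ toCenterMap k J aM =
    LinearMap.mul k A b ∘ₗ toCenterMap k J aM := by
  have hcomm : convD (Coalgebra.comul : H →ₗ[k] H ⊗[k] H) (act.flip b) aM =
      convD (Coalgebra.comul : H →ₗ[k] H ⊗[k] H) aM (act.flip b) := by
    ext h
    exact ha.comm' h b
  have hco := (Coalgebra.coassoc (R := k) (A := H))
  rw [toCenterMap_eq]
  calc LinearMap.mulRight k b ∘ₗ convD Coalgebra.comul (J ∘ₗ HopfAlgebra.antipode (R := k))
        (convD Coalgebra.comul aM J)
      = convD Coalgebra.comul (J ∘ₗ HopfAlgebra.antipode (R := k))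
          (convD Coalgebra.comul aM (LinearMap.mulRight k b ∘ₗ J)) := by
        rw [mulRight_comp_conv, mulRight_comp_conv]
    _ = convD Coalgebra.comul (J ∘ₗ HopfAlgebra.antipode (R := k))
          (convD Coalgebra.comul aM (convD Coalgebra.comul (act.flip b) J)) := by
        rw [P4 hJ b]
    _ = convD Coalgebra.comul (J ∘ₗ HopfAlgebra.antipode (R := k))
          (convD Coalgebra.comul (convD Coalgebra.comul aM (act.flip b)) J) := by
        rw [conv_assoc _ hco]
    _ = convD Coalgebra.comul (J ∘ₗ HopfAlgebra.antipode (R := k))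
          (convD Coalgebra.comul (convD Coalgebra.comul (act.flip b) aM) J) := by
        rw [hcomm]
    _ = convD Coalgebra.comul (J ∘ₗ HopfAlgebra.antipode (R := k))
          (convD Coalgebra.comul (act.flip b) (convD Coalgebra.comul aM J)) := by
        rw [conv_assoc _ hco]
    _ = convD Coalgebra.comul
          (convD Coalgebra.comul (J ∘ₗ HopfAlgebra.antipode (R := k)) (act.flip b))
          (convD Coalgebra.comul aM J) := by
        rw [conv_assoc _ hco]
    _ = convD Coalgebra.comul
          (LinearMap.mul k A b ∘ₗ (J ∘ₗ HopfAlgebra.antipode (R := k)))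
          (convD Coalgebra.comul aM J) := by
        rw [P5 hJ b]
    _ = LinearMap.mul k A b ∘ₗ convD Coalgebra.comul (J ∘ₗ HopfAlgebra.antipode (R := k))
          (convD Coalgebra.comul aM J) := by
        rw [mul_comp_conv]

end HopfLemmas

end EquivariantMorita

namespace EquivariantMorita

open TensorProduct LinearMap

section Bridge

variable {k : Type*} [CommRing k] {H : Type*} [Ring H] [HopfAlgebra k H]
variable {A : Type*} [Ring A] [Algebra k A]

lemma MS1 (f g : H →ₗ[k] A) :
    convD (comul2 k H) (f ∘ₗ piL k H) (g ∘ₗ piR k H) =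
      TensorProduct.lift (LinearMap.mul k A) ∘ₗ TensorProduct.map f g := by
  refine LinearMap.ext fun c => ?_
  simp only [convD, LinearMap.comp_apply]
  have h1 : TensorProduct.map (f ∘ₗ piL k H) (g ∘ₗ piR k H) (comul2 k H c) =
      TensorProduct.map f g (TensorProduct.map (piL k H) (piR k H) (comul2 k H c)) := by
    rw [← LinearMap.comp_apply (TensorProduct.map f g), ← TensorProduct.map_comp]
  have h2 : TensorProduct.map (piL k H) (piR k H) (comul2 k H c) = c :=
    LinearMap.congr_fun (K1 (k := k) (H := H)) c
  rw [h1, h2]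

lemma MS2 (f g : H →ₗ[k] A) :
    convD (comul2 k H) (f ∘ₗ piR k H) (g ∘ₗ piL k H) =
      TensorProduct.lift (LinearMap.mul k A) ∘ₗ TensorProduct.map f g ∘ₗ
        (TensorProduct.comm k H H).toLinearMap := by
  refine LinearMap.ext fun c => ?_
  simp only [convD, LinearMap.comp_apply]
  have h1 : TensorProduct.map (f ∘ₗ piR k H) (g ∘ₗ piL k H) (comul2 k H c) =
      TensorProduct.map f g (TensorProduct.map (piR k H) (piL k H) (comul2 k H c)) := by
    rw [← LinearMap.comp_apply (TensorProduct.map f g), ← TensorProduct.map_comp]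
  have h2 : TensorProduct.map (piR k H) (piL k H) (comul2 k H c) =
      (TensorProduct.comm k H H) c :=
    LinearMap.congr_fun (K6 (k := k) (H := H)) c
  rw [h1, h2]
  rfl

lemma ML (f : H →ₗ[k] A) (γ : H ⊗[k] H →ₗ[k] A) :
    convD (comul2 k H) (f ∘ₗ piL k H) γ =
      TensorProduct.lift (LinearMap.mul k A) ∘ₗ TensorProduct.map f γ ∘ₗ
        (TensorProduct.assoc k H H H).toLinearMap ∘ₗ
        (Coalgebra.comul : H →ₗ[k] H ⊗[k] H).rTensor H := by
  refine LinearMap.ext fun c => ?_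
  simp only [convD, LinearMap.comp_apply]
  have h1 : TensorProduct.map (f ∘ₗ piL k H) γ (comul2 k H c) =
      TensorProduct.map f γ
        (TensorProduct.map (piL k H) LinearMap.id (comul2 k H c)) := by
    rw [← LinearMap.comp_apply (TensorProduct.map f γ), ← TensorProduct.map_comp,
      LinearMap.comp_id]
  have h2 : TensorProduct.map (piL k H) LinearMap.id (comul2 k H c) =
      (TensorProduct.assoc k H H H)
        ((Coalgebra.comul : H →ₗ[k] H ⊗[k] H).rTensor H c) :=
    LinearMap.congr_fun (TKa (k := k) (H := H)) c
  rw [h1, h2]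
  rfl

lemma EVmap (f : H →ₗ[k] A) (γ : H ⊗[k] H →ₗ[k] A) (y : H) :
    TensorProduct.lift (LinearMap.mul k A) ∘ₗ TensorProduct.map f γ ∘ₗ
      (TensorProduct.assoc k H H H).toLinearMap ∘ₗ
      (TensorProduct.mk k (H ⊗[k] H) H).flip y =
    TensorProduct.lift (LinearMap.mul k A) ∘ₗ
      TensorProduct.map f (γ ∘ₗ (TensorProduct.mk k H H).flip y) := by
  ext a b
  simp

lemma trL (f g : H →ₗ[k] A) :
    convD (Coalgebra.comul : H →ₗ[k] H ⊗[k] H) f g ∘ₗ piL k H =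
      convD (comul2 k H) (f ∘ₗ piL k H) (g ∘ₗ piL k H) :=
  conv_comp _ _ _ (K2 (k := k) (H := H)) f g

lemma trR (f g : H →ₗ[k] A) :
    convD (Coalgebra.comul : H →ₗ[k] H ⊗[k] H) f g ∘ₗ piR k H =
      convD (comul2 k H) (f ∘ₗ piR k H) (g ∘ₗ piR k H) :=
  conv_comp _ _ _ (K3 (k := k) (H := H)) f g

lemma trM (f g : H →ₗ[k] A) :
    convD (Coalgebra.comul : H →ₗ[k] H ⊗[k] H) f g ∘ₗ LinearMap.mul' k H =
      convD (comul2 k H) (f ∘ₗ LinearMap.mul' k H) (g ∘ₗ LinearMap.mul' k H) :=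
  conv_comp _ _ _ (K4 (k := k) (H := H)) f g

/-- The antipode is an anti-homomorphism, in composed form. -/
lemma antipode_mul' :
    (HopfAlgebra.antipode (R := k) : H →ₗ[k] H) ∘ₗ LinearMap.mul' k H =
      TensorProduct.lift (LinearMap.mul k H) ∘ₗ
        TensorProduct.map (HopfAlgebra.antipode (R := k)) (HopfAlgebra.antipode (R := k)) ∘ₗ
        (TensorProduct.comm k H H).toLinearMap := by
  set S : H →ₗ[k] H := HopfAlgebra.antipode (R := k) with hS
  set m : H ⊗[k] H →ₗ[k] H := LinearMap.mul' k H with hm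
  set G : H ⊗[k] H →ₗ[k] H := TensorProduct.lift (LinearMap.mul k H) ∘ₗ
      TensorProduct.map S S ∘ₗ (TensorProduct.comm k H H).toLinearMap with hG
  have hmlift : m = TensorProduct.lift (LinearMap.mul k H) := rfl
  have A0 : m = convD (comul2 k H) (piL k H) (piR k H) := by
    rw [show piL k H = LinearMap.id ∘ₗ piL k H from (LinearMap.id_comp _).symm,
      show piR k H = LinearMap.id ∘ₗ piR k H from (LinearMap.id_comp _).symm, MS1]
    rw [TensorProduct.map_id, LinearMap.comp_id, hmlift]
  have A2' : convD (comul2 k H) (S ∘ₗ piR k H) (S ∘ₗ piL k H) = G := (MS2 S S).symm ▸ rfl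
  have A1 : convD (comul2 k H) (S ∘ₗ m) m =
      Algebra.linearMap k H ∘ₗ counit2 k H := by
    have h := conv_comp (Coalgebra.comul : H →ₗ[k] H ⊗[k] H) (comul2 k H) m
      (K4 (k := k) (H := H)) S LinearMap.id
    rw [antipode_conv_left, LinearMap.id_comp] at h
    rw [← h, LinearMap.comp_assoc, K5c]
  have A2 : convD (comul2 k H) m G = Algebra.linearMap k H ∘ₗ counit2 k H := by
    rw [← A2', A0, conv_assoc _ (hco2 (k := k) (H := H))]
    have inner1 : convD (comul2 k H) (piR k H)
        (convD (comul2 k H) (S ∘ₗ piR k H) (S ∘ₗ piL k H)) =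
        convD (comul2 k H) (convD (comul2 k H) (piR k H) (S ∘ₗ piR k H)) (S ∘ₗ piL k H) := by
      rw [conv_assoc _ (hco2 (k := k) (H := H))]
    rw [inner1]
    have inner2 : convD (comul2 k H) (piR k H) (S ∘ₗ piR k H) =
        Algebra.linearMap k H ∘ₗ counit2 k H := by
      have h := conv_comp (Coalgebra.comul : H →ₗ[k] H ⊗[k] H) (comul2 k H) (piR k H)
        (K3 (k := k) (H := H)) LinearMap.id S
      rw [antipode_conv_right, LinearMap.id_comp] at h
      rw [← h, LinearMap.comp_assoc, K5b]
    rw [inner2, conv_unit_left _ _ (hr2 (k := k) (H := H))]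
    have h := conv_comp (Coalgebra.comul : H →ₗ[k] H ⊗[k] H) (comul2 k H) (piL k H)
      (K2 (k := k) (H := H)) LinearMap.id S
    rw [antipode_conv_right, LinearMap.id_comp] at h
    rw [← h, LinearMap.comp_assoc, K5a]
  calc S ∘ₗ m
      = convD (comul2 k H) (S ∘ₗ m) (Algebra.linearMap k H ∘ₗ counit2 k H) :=
        (conv_unit_right _ _ (hl2 (k := k) (H := H)) _).symm
    _ = convD (comul2 k H) (S ∘ₗ m) (convD (comul2 k H) m G) := by rw [A2]
    _ = convD (comul2 k H) (convD (comul2 k H) (S ∘ₗ m) m) G := by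
        rw [conv_assoc _ (hco2 (k := k) (H := H))]
    _ = convD (comul2 k H) (Algebra.linearMap k H ∘ₗ counit2 k H) G := by rw [A1]
    _ = G := conv_unit_left _ _ (hr2 (k := k) (H := H)) _

end Bridge

end EquivariantMorita

namespace EquivariantMorita

open TensorProduct LinearMap

section Final

variable {k : Type*} [CommRing k] {H : Type*} [Ring H] [HopfAlgebra k H]
variable {A : Type*} [Ring A] [Algebra k A]
variable {act : H →ₗ[k] A →ₗ[k] A} {J : H →ₗ[k] A} {aM : H →ₗ[k] A}

lemma Jlift (hJ : IsMomentumMap k act J) :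
    J ∘ₗ TensorProduct.lift (LinearMap.mul k H) =
      TensorProduct.lift (LinearMap.mul k A) ∘ₗ TensorProduct.map J J := by
  ext x y
  simp [hJ.map_mul']

lemma B2 (hJ : IsMomentumMap k act J) :
    J ∘ₗ LinearMap.mul' k H =
      convD (comul2 k H) (J ∘ₗ piL k H) (J ∘ₗ piR k H) := by
  rw [MS1]
  exact Jlift hJ

lemma B1 (hJ : IsMomentumMap k act J) :
    (J ∘ₗ HopfAlgebra.antipode (R := k)) ∘ₗ LinearMap.mul' k H =
      convD (comul2 k H) ((J ∘ₗ HopfAlgebra.antipode (R := k)) ∘ₗ piR k H)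
        ((J ∘ₗ HopfAlgebra.antipode (R := k)) ∘ₗ piL k H) := by
  rw [MS2]
  refine LinearMap.ext fun c => ?_
  have h3 : ∀ u : H ⊗[k] H,
      J (TensorProduct.lift (LinearMap.mul k H)
        (TensorProduct.map (HopfAlgebra.antipode (R := k))
          (HopfAlgebra.antipode (R := k)) u)) =
      TensorProduct.lift (LinearMap.mul k A)
        (TensorProduct.map (J ∘ₗ HopfAlgebra.antipode (R := k))
          (J ∘ₗ HopfAlgebra.antipode (R := k)) u) := by
    intro u
    have h2 := LinearMap.congr_fun (Jlift hJ)
      (TensorProduct.map (HopfAlgebra.antipode (R := k)) (HopfAlgebra.antipode (R := k)) u)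
    simp only [LinearMap.comp_apply] at h2
    rw [h2, ← LinearMap.comp_apply (TensorProduct.map J J), ← TensorProduct.map_comp]
  have h1 := LinearMap.congr_fun (antipode_mul' (k := k) (H := H)) c
  simp only [LinearMap.comp_apply] at h1 ⊢
  rw [h1]
  exact h3 _

lemma gammaComp (hJ : IsMomentumMap k act J) (y : H) :
    convD (comul2 k H) (aM ∘ₗ piR k H)
        ((J ∘ₗ HopfAlgebra.antipode (R := k)) ∘ₗ piL k H) ∘ₗ
      (TensorProduct.mk k H H).flip y =
    LinearMap.mul k A (aM y) ∘ₗ (J ∘ₗ HopfAlgebra.antipode (R := k)) := by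
  rw [MS2]
  ext z
  simp

lemma deltaComp (hJ : IsMomentumMap k act J) (y : H) :
    convD (comul2 k H) (J ∘ₗ piL k H)
        (convD (comul2 k H) (aM ∘ₗ piR k H)
          ((J ∘ₗ HopfAlgebra.antipode (R := k)) ∘ₗ piL k H)) ∘ₗ
      (TensorProduct.mk k H H).flip y =
    act.flip (aM y) := by
  set γ : H ⊗[k] H →ₗ[k] A := convD (comul2 k H) (aM ∘ₗ piR k H)
    ((J ∘ₗ HopfAlgebra.antipode (R := k)) ∘ₗ piL k H) with hγ
  ext x
  have h1 := LinearMap.congr_fun (ML J γ) (x ⊗ₜ[k] y)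
  simp only [LinearMap.comp_apply, LinearMap.rTensor_tmul, LinearEquiv.coe_coe,
    TensorProduct.mk_apply, LinearMap.flip_apply] at h1 ⊢
  rw [h1]
  have h2 := LinearMap.congr_fun (EVmap J γ y) (Coalgebra.comul x)
  simp only [LinearMap.comp_apply, LinearMap.flip_apply, TensorProduct.mk_apply,
    LinearEquiv.coe_coe] at h2
  rw [h2]
  have h3 : TensorProduct.map J (γ ∘ₗ (TensorProduct.mk k H H).flip y)
        (Coalgebra.comul x) =
      TensorProduct.map J (LinearMap.mul k A (aM y) ∘ₗ
        (J ∘ₗ HopfAlgebra.antipode (R := k))) (Coalgebra.comul x) := by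
    rw [hγ, gammaComp hJ y]
  rw [h3]
  exact (hJ.inner' x (aM y)).symm

lemma B3 (hJ : IsMomentumMap k act J) (ha : MemGl k act aM) :
    aM ∘ₗ LinearMap.mul' k H =
      convD (comul2 k H) (aM ∘ₗ piL k H)
        (convD (comul2 k H) (J ∘ₗ piL k H)
          (convD (comul2 k H) (aM ∘ₗ piR k H)
            ((J ∘ₗ HopfAlgebra.antipode (R := k)) ∘ₗ piL k H))) := by
  set δ : H ⊗[k] H →ₗ[k] A := convD (comul2 k H) (J ∘ₗ piL k H)
    (convD (comul2 k H) (aM ∘ₗ piR k H)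
      ((J ∘ₗ HopfAlgebra.antipode (R := k)) ∘ₗ piL k H)) with hδ
  ext x y
  simp only [AlgebraTensorModule.curry_apply, curry_apply, LinearMap.coe_restrictScalars,
    LinearMap.comp_apply, LinearMap.mul'_apply]
  rw [ha.map_mul' x y]
  have h1 := LinearMap.congr_fun (ML aM δ) (x ⊗ₜ[k] y)
  simp only [LinearMap.comp_apply, LinearMap.rTensor_tmul, LinearEquiv.coe_coe] at h1
  rw [h1]
  have h2 := LinearMap.congr_fun (EVmap aM δ y) (Coalgebra.comul x)
  simp only [LinearMap.comp_apply, LinearEquiv.coe_coe, LinearMap.flip_apply,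
    TensorProduct.mk_apply] at h2
  rw [h2]
  have h3 : TensorProduct.map aM (δ ∘ₗ (TensorProduct.mk k H H).flip y)
        (Coalgebra.comul x) =
      TensorProduct.map aM (act.flip (aM y)) (Coalgebra.comul x) := by
    rw [hδ, deltaComp hJ y]
  rw [h3]
  rfl

lemma R3conv (hJ : IsMomentumMap k act J) (ha : MemGl k act aM) :
    convD (comul2 k H) ((J ∘ₗ HopfAlgebra.antipode (R := k)) ∘ₗ piR k H)
        (toCenterMap k J aM ∘ₗ piL k H) =
      convD (comul2 k H) (toCenterMap k J aM ∘ₗ piL k H)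
        ((J ∘ₗ HopfAlgebra.antipode (R := k)) ∘ₗ piR k H) := by
  rw [MS1, MS2]
  refine TensorProduct.ext' fun x y => ?_
  simp only [LinearMap.comp_apply, LinearEquiv.coe_coe, TensorProduct.comm_tmul,
    TensorProduct.map_tmul, TensorProduct.lift.tmul, LinearMap.mul_apply']
  have hc := LinearMap.congr_fun (central hJ ha ((J ∘ₗ HopfAlgebra.antipode (R := k)) y)) x
  simpa using hc.symm

lemma Tmul (hJ : IsMomentumMap k act J) (ha : MemGl k act aM) :
    toCenterMap k J aM ∘ₗ LinearMap.mul' k H =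
      TensorProduct.lift (LinearMap.mul k A) ∘ₗ
        TensorProduct.map (toCenterMap k J aM) (toCenterMap k J aM) := by
  have hco := hco2 (k := k) (H := H)
  have hTL : toCenterMap k J aM ∘ₗ piL k H =
      convD (comul2 k H) ((J ∘ₗ HopfAlgebra.antipode (R := k)) ∘ₗ piL k H)
        (convD (comul2 k H) (aM ∘ₗ piL k H) (J ∘ₗ piL k H)) := by
    rw [toCenterMap_eq, trL, trL]
  have hTR : toCenterMap k J aM ∘ₗ piR k H =
      convD (comul2 k H) ((J ∘ₗ HopfAlgebra.antipode (R := k)) ∘ₗ piR k H)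
        (convD (comul2 k H) (aM ∘ₗ piR k H) (J ∘ₗ piR k H)) := by
    rw [toCenterMap_eq, trR, trR]
  have u1 : convD (comul2 k H) ((J ∘ₗ HopfAlgebra.antipode (R := k)) ∘ₗ piL k H) (J ∘ₗ piL k H) =
      Algebra.linearMap k A ∘ₗ counit2 k H := by
    rw [← trL, P1 hJ, LinearMap.comp_assoc, K5a]
  have step_a : convD (comul2 k H) ((J ∘ₗ HopfAlgebra.antipode (R := k)) ∘ₗ piL k H)
      (convD (comul2 k H) (J ∘ₗ piL k H) (J ∘ₗ piR k H)) = J ∘ₗ piR k H := by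
    rw [← conv_assoc _ hco, u1, conv_unit_left _ _ (hr2 (k := k) (H := H))]
  show convD Coalgebra.comul (J ∘ₗ HopfAlgebra.antipode (R := k))
      (convD Coalgebra.comul aM J) ∘ₗ LinearMap.mul' k H =
    TensorProduct.lift (LinearMap.mul k A) ∘ₗ
      TensorProduct.map (toCenterMap k J aM) (toCenterMap k J aM)
  rw [trM, trM, B1 hJ, B2 hJ, B3 hJ ha, ← MS1]
  calc convD (comul2 k H) (convD (comul2 k H) ((J ∘ₗ HopfAlgebra.antipode (R := k)) ∘ₗ piR k H) ((J ∘ₗ HopfAlgebra.antipode (R := k)) ∘ₗ piL k H)) (convD (comul2 k H) (convD (comul2 k H) (aM ∘ₗ piL k H) (convD (comul2 k H) (J ∘ₗ piL k H) (convD (comul2 k H) (aM ∘ₗ piR k H) ((J ∘ₗ HopfAlgebra.antipode (R := k)) ∘ₗ piL k H)))) (convD (comul2 k H) (J ∘ₗ piL k H) (J ∘ₗ piR k H)))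
      = convD (comul2 k H) ((J ∘ₗ HopfAlgebra.antipode (R := k)) ∘ₗ piR k H) (convD (comul2 k H) ((J ∘ₗ HopfAlgebra.antipode (R := k)) ∘ₗ piL k H) (convD (comul2 k H) (convD (comul2 k H) (aM ∘ₗ piL k H) (convD (comul2 k H) (J ∘ₗ piL k H) (convD (comul2 k H) (aM ∘ₗ piR k H) ((J ∘ₗ HopfAlgebra.antipode (R := k)) ∘ₗ piL k H)))) (convD (comul2 k H) (J ∘ₗ piL k H) (J ∘ₗ piR k H)))) := by rw [conv_assoc _ hco]
    _ = convD (comul2 k H) ((J ∘ₗ HopfAlgebra.antipode (R := k)) ∘ₗ piR k H) (convD (comul2 k H) ((J ∘ₗ HopfAlgebra.antipode (R := k)) ∘ₗ piL k H) (convD (comul2 k H) (aM ∘ₗ piL k H) (convD (comul2 k H) (convD (comul2 k H) (J ∘ₗ piL k H) (convD (comul2 k H) (aM ∘ₗ piR k H) ((J ∘ₗ HopfAlgebra.antipode (R := k)) ∘ₗ piL k H))) (convD (comul2 k H) (J ∘ₗ piL k H) (J ∘ₗ piR k H))))) := by rw [conv_assoc _ hco]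
    _ = convD (comul2 k H) ((J ∘ₗ HopfAlgebra.antipode (R := k)) ∘ₗ piR k H) (convD (comul2 k H) ((J ∘ₗ HopfAlgebra.antipode (R := k)) ∘ₗ piL k H) (convD (comul2 k H) (aM ∘ₗ piL k H) (convD (comul2 k H) (J ∘ₗ piL k H) (convD (comul2 k H) (convD (comul2 k H) (aM ∘ₗ piR k H) ((J ∘ₗ HopfAlgebra.antipode (R := k)) ∘ₗ piL k H)) (convD (comul2 k H) (J ∘ₗ piL k H) (J ∘ₗ piR k H)))))) := by rw [conv_assoc _ hco]
    _ = convD (comul2 k H) ((J ∘ₗ HopfAlgebra.antipode (R := k)) ∘ₗ piR k H) (convD (comul2 k H) ((J ∘ₗ HopfAlgebra.antipode (R := k)) ∘ₗ piL k H) (convD (comul2 k H) (aM ∘ₗ piL k H) (convD (comul2 k H) (J ∘ₗ piL k H) (convD (comul2 k H) (aM ∘ₗ piR k H) (convD (comul2 k H) ((J ∘ₗ HopfAlgebra.antipode (R := k)) ∘ₗ piL k H) (convD (comul2 k H) (J ∘ₗ piL k H) (J ∘ₗ piR k H))))))) := by rw [conv_assoc _ hco]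
    _ = convD (comul2 k H) ((J ∘ₗ HopfAlgebra.antipode (R := k)) ∘ₗ piR k H) (convD (comul2 k H) ((J ∘ₗ HopfAlgebra.antipode (R := k)) ∘ₗ piL k H) (convD (comul2 k H) (aM ∘ₗ piL k H) (convD (comul2 k H) (J ∘ₗ piL k H) (convD (comul2 k H) (aM ∘ₗ piR k H) (J ∘ₗ piR k H))))) := by rw [step_a]
    _ = convD (comul2 k H) ((J ∘ₗ HopfAlgebra.antipode (R := k)) ∘ₗ piR k H) (convD (comul2 k H) ((J ∘ₗ HopfAlgebra.antipode (R := k)) ∘ₗ piL k H) (convD (comul2 k H) (convD (comul2 k H) (aM ∘ₗ piL k H) (J ∘ₗ piL k H)) (convD (comul2 k H) (aM ∘ₗ piR k H) (J ∘ₗ piR k H)))) := by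
        rw [← conv_assoc _ hco (aM ∘ₗ piL k H) (J ∘ₗ piL k H) (convD (comul2 k H) (aM ∘ₗ piR k H) (J ∘ₗ piR k H))]
    _ = convD (comul2 k H) ((J ∘ₗ HopfAlgebra.antipode (R := k)) ∘ₗ piR k H) (convD (comul2 k H) (convD (comul2 k H) ((J ∘ₗ HopfAlgebra.antipode (R := k)) ∘ₗ piL k H) (convD (comul2 k H) (aM ∘ₗ piL k H) (J ∘ₗ piL k H))) (convD (comul2 k H) (aM ∘ₗ piR k H) (J ∘ₗ piR k H))) := by
        rw [← conv_assoc _ hco ((J ∘ₗ HopfAlgebra.antipode (R := k)) ∘ₗ piL k H) (convD (comul2 k H) (aM ∘ₗ piL k H) (J ∘ₗ piL k H)) (convD (comul2 k H) (aM ∘ₗ piR k H) (J ∘ₗ piR k H))]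
    _ = convD (comul2 k H) (convD (comul2 k H) ((J ∘ₗ HopfAlgebra.antipode (R := k)) ∘ₗ piR k H) (convD (comul2 k H) ((J ∘ₗ HopfAlgebra.antipode (R := k)) ∘ₗ piL k H) (convD (comul2 k H) (aM ∘ₗ piL k H) (J ∘ₗ piL k H)))) (convD (comul2 k H) (aM ∘ₗ piR k H) (J ∘ₗ piR k H)) := by
        rw [← conv_assoc _ hco ((J ∘ₗ HopfAlgebra.antipode (R := k)) ∘ₗ piR k H) (convD (comul2 k H) ((J ∘ₗ HopfAlgebra.antipode (R := k)) ∘ₗ piL k H) (convD (comul2 k H) (aM ∘ₗ piL k H) (J ∘ₗ piL k H))) (convD (comul2 k H) (aM ∘ₗ piR k H) (J ∘ₗ piR k H))]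
    _ = convD (comul2 k H) (convD (comul2 k H) ((J ∘ₗ HopfAlgebra.antipode (R := k)) ∘ₗ piR k H) (toCenterMap k J aM ∘ₗ piL k H)) (convD (comul2 k H) (aM ∘ₗ piR k H) (J ∘ₗ piR k H)) := by rw [← hTL]
    _ = convD (comul2 k H) (convD (comul2 k H) (toCenterMap k J aM ∘ₗ piL k H) ((J ∘ₗ HopfAlgebra.antipode (R := k)) ∘ₗ piR k H)) (convD (comul2 k H) (aM ∘ₗ piR k H) (J ∘ₗ piR k H)) := by rw [R3conv hJ ha]
    _ = convD (comul2 k H) (toCenterMap k J aM ∘ₗ piL k H) (convD (comul2 k H) ((J ∘ₗ HopfAlgebra.antipode (R := k)) ∘ₗ piR k H) (convD (comul2 k H) (aM ∘ₗ piR k H) (J ∘ₗ piR k H))) := by rw [conv_assoc _ hco]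
    _ = convD (comul2 k H) (toCenterMap k J aM ∘ₗ piL k H) (toCenterMap k J aM ∘ₗ piR k H) := by rw [← hTR]

end Final

end EquivariantMorita

namespace EquivariantMorita

/-- Let `J` be a momentum map for an `H`-module algebra action on `A`.
For `𝖺 ∈ Gl(H,A)`, the map `𝖺_J(g) = J(S(g₍₁₎)) 𝖺(g₍₂₎) J(g₍₃₎)` takes values in the
center of `A` and is a unital algebra homomorphism. -/
theorem toCenterMap_central_algHom
    (k : Type*) [CommRing k]
    {H : Type*} [Ring H] [HopfAlgebra k H]
    {A : Type*} [Ring A] [Algebra k A]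
    (act : H →ₗ[k] A →ₗ[k] A) (hact : IsModuleAlgebraAction k act)
    (J : H →ₗ[k] A) (hJ : IsMomentumMap k act J)
    (a : H →ₗ[k] A) (ha : MemGl k act a) :
    (∀ (g : H) (b : A), toCenterMap k J a g * b = b * toCenterMap k J a g)
      ∧ toCenterMap k J a 1 = 1
      ∧ ∀ g h : H, toCenterMap k J a (g * h) = toCenterMap k J a g * toCenterMap k J a h := by
  refine ⟨fun g b => ?_, ?_, fun g h => ?_⟩
  · have hc := LinearMap.congr_fun (central hJ ha b) g
    simpa using hc
  · have h1 : (Coalgebra.comul : H →ₗ[k] H ⊗[k] H) (1 : H) = (1 : H) ⊗ₜ[k] (1 : H) := by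
      rw [Bialgebra.comul_one]
      rfl
    simp [toCenterMap, swMul, sw, h1, antipode_one', hJ.map_one', ha.map_one']
  · have hc := LinearMap.congr_fun (Tmul hJ ha) (g ⊗ₜ[k] h)
    simpa using hc

end EquivariantMorita
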